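/- Let k be a positive integer, ε₀ > 0 a real number, a₁,…,a_k and a* positive integers, and set ε_i = a_i·ε₀ for each i and ε* = a*·ε₀. Let B = ⌊(Σ_{i=1}^k a_i − a*)/2⌋ (an integer, possibly negative). Then Σ_{S ⊆ {1,…,k}} max(exp(Σ_{i∈S} ε_i) − exp(ε*)·exp(Σ_{i∉S} ε_i), 0) = Σ_{T ⊆ {1,…,k} : Σ_{i∈T} a_i ≤ B} ( exp(Σ_{i=1}^k ε_i)·exp(−Σ_{i∈T} ε_i) − exp(ε*)·exp(Σ_{i∈T} ε_i) ). -/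

import Mathlib

open Finset

/-- The knapsack rewriting from the proof of Lemma 5.2 of Murtagh–Vadhan: when every
`ε_i = a_i·ε₀` and `ε* = a*·ε₀` are integer multiples of `ε₀ > 0`, the sum in the optimal
composition formula equals a sum over subsets `T` satisfying the integer knapsack
constraint `Σ_{i∈T} a_i ≤ B` with `B = ⌊(Σ a_i − a*)/2⌋`. -/
theorem optComp_knapsack (k : ℕ) (hk : 0 < k) (ε0 : ℝ) (hε0 : 0 < ε0)
    (a : Fin k → ℕ) (ha : ∀ i, 0 < a i) (astar : ℕ) (hastar : 0 < astar)
    (ε : Fin k → ℝ) (hεdef : ∀ i, ε i = (a i : ℝ) * ε0)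
    (εstar : ℝ) (hεstar : εstar = (astar : ℝ) * ε0)
    (B : ℤ) (hB : B = ⌊((∑ i, (a i : ℝ)) - (astar : ℝ)) / 2⌋) :
    ∑ S : Finset (Fin k),
        max (Real.exp (∑ i ∈ S, ε i) - Real.exp εstar * Real.exp (∑ i ∈ Sᶜ, ε i)) 0
      = ∑ T ∈ Finset.univ.filter (fun T : Finset (Fin k) => (∑ i ∈ T, (a i : ℤ)) ≤ B),
          (Real.exp (∑ i, ε i) * Real.exp (-∑ i ∈ T, ε i)
            - Real.exp εstar * Real.exp (∑ i ∈ T, ε i)) := by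
  -- key equivalence
  have hsumε : ∀ T : Finset (Fin k), ∑ i ∈ T, ε i = (∑ i ∈ T, (a i : ℝ)) * ε0 := by
    intro T
    rw [Finset.sum_mul]
    exact Finset.sum_congr rfl fun i _ => hεdef i
  have key : ∀ T : Finset (Fin k),
      ((∑ i ∈ T, (a i : ℤ)) ≤ B ↔
        Real.exp εstar * Real.exp (∑ i ∈ T, ε i)
          ≤ Real.exp (∑ i, ε i) * Real.exp (-∑ i ∈ T, ε i)) := by
    intro T
    rw [← Real.exp_add, ← Real.exp_add, Real.exp_le_exp, hB, Int.le_floor]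
    push_cast
    rw [hsumε T, hsumε Finset.univ, hεstar]
    constructor
    · intro h; nlinarith [h]
    · intro h; nlinarith [h]
  -- reindex LHS by complement
  have hre : ∑ S : Finset (Fin k),
        max (Real.exp (∑ i ∈ S, ε i) - Real.exp εstar * Real.exp (∑ i ∈ Sᶜ, ε i)) 0
      = ∑ T : Finset (Fin k),
        max (Real.exp (∑ i ∈ Tᶜ, ε i) - Real.exp εstar * Real.exp (∑ i ∈ T, ε i)) 0 := by
    apply Fintype.sum_bijective compl compl_involutive.bijective
    intro S
    rw [compl_compl]
  rw [hre]
  have hcompl : ∀ T : Finset (Fin k),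
      Real.exp (∑ i ∈ Tᶜ, ε i) = Real.exp (∑ i, ε i) * Real.exp (-∑ i ∈ T, ε i) := by
    intro T
    rw [← Real.exp_add]
    congr 1
    have := Finset.sum_add_sum_compl T ε
    linarith
  rw [Finset.sum_filter]
  apply Finset.sum_congr rfl
  intro T _
  rw [hcompl T]
  by_cases h : (∑ i ∈ T, (a i : ℤ)) ≤ B
  · rw [if_pos h, max_eq_left (sub_nonneg.mpr ((key T).mp h))]
  · rw [if_neg h, max_eq_right]
    have := (key T).not.mp h
    push_neg at this
    linarith
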